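/- Let Δ_1, …, Δ_r be a centered proper nef-partition in ℝ^d (so each Δ_i is a lattice polytope of positive dimension containing 0, and Δ_1 + ⋯ + Δ_r is a d-dimensional reflexive polytope with 0 as its unique interior lattice point). Then r ≤ 2d. -/

import Mathlib

open Pointwise

noncomputable section

/-- A point of `ℝ^n` all of whose coordinates are integers (a lattice point of `ℤ^n`). -/
def IsLatticePt {n : ℕ} (x : Fin n → ℝ) : Prop := ∀ k, ∃ m : ℤ, x k = (m : ℝ)

/-- A lattice polytope: the convex hull of finitely many lattice points. -/
def IsLatticePoly {n : ℕ} (P : Set (Fin n → ℝ)) : Prop :=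
  ∃ V : Finset (Fin n → ℝ), V.Nonempty ∧ (∀ v ∈ V, IsLatticePt v) ∧
    P = convexHull ℝ (V : Set (Fin n → ℝ))

/-- The standard inner product pairing on `ℝ^n`. -/
def pairR {n : ℕ} (x y : Fin n → ℝ) : ℝ := ∑ k, x k * y k

/-- The dual polytope `P* = {y : ⟨x,y⟩ ≥ -1 ∀ x ∈ P}`. -/
def dualPoly {n : ℕ} (P : Set (Fin n → ℝ)) : Set (Fin n → ℝ) :=
  {y | ∀ x ∈ P, -1 ≤ pairR x y}

/-- A reflexive polytope: a lattice polytope with `0` in its interior whose dual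
polytope is again a lattice polytope. -/
def IsReflexivePoly {n : ℕ} (P : Set (Fin n → ℝ)) : Prop :=
  IsLatticePoly P ∧ (0 : Fin n → ℝ) ∈ interior P ∧ IsLatticePoly (dualPoly P)

/-- The dimension of a polytope: the dimension of the direction of its affine span. -/
def polyDim {n : ℕ} (P : Set (Fin n → ℝ)) : ℕ :=
  Module.finrank ℝ (affineSpan ℝ P).direction

/-- A (full-dimensional) Gorenstein polytope of index `r`: `rP` has `m` as its unique
interior lattice point and `rP - m` is reflexive. -/
def IsGorensteinPoly {n : ℕ} (P : Set (Fin n → ℝ)) (r : ℕ) (m : Fin n → ℝ) : Prop :=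
  IsLatticePoly P ∧ IsLatticePt m ∧
  (∀ x, IsLatticePt x → (x ∈ interior ((r : ℝ) • P) ↔ x = m)) ∧
  IsReflexivePoly ((fun x => x - m) '' ((r : ℝ) • P))

/-- `y` is a point of the lattice dual to the (saturated) lattice `ℤ^n ∩ W` inside `W`. -/
def IsDualLatticePt {n : ℕ} (W : Submodule ℝ (Fin n → ℝ)) (y : Fin n → ℝ) : Prop :=
  y ∈ W ∧ ∀ x ∈ W, IsLatticePt x → ∃ m : ℤ, pairR x y = (m : ℝ)

/-- Reflexivity of a (possibly lower-dimensional) lattice polytope inside its linear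
span: `0` is in the relative interior and the dual polytope taken inside the linear
span is a lattice polytope with respect to the dual lattice. -/
def IsReflexiveIn {n : ℕ} (P : Set (Fin n → ℝ)) : Prop :=
  IsLatticePoly P ∧ (0 : Fin n → ℝ) ∈ intrinsicInterior ℝ P ∧
  ∃ V : Finset (Fin n → ℝ), V.Nonempty ∧
    (∀ v ∈ V, IsDualLatticePt (Submodule.span ℝ P) v) ∧
    {y | y ∈ Submodule.span ℝ P ∧ ∀ x ∈ P, -1 ≤ pairR x y} =
      convexHull ℝ (V : Set (Fin n → ℝ))

/-- Gorenstein polytope of index `r` (possibly lower-dimensional): `rP` has `m` as its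
unique relative-interior lattice point and `rP - m` is reflexive within its span. -/
def IsGorensteinIn {n : ℕ} (P : Set (Fin n → ℝ)) (r : ℕ) (m : Fin n → ℝ) : Prop :=
  IsLatticePoly P ∧ IsLatticePt m ∧
  (∀ x, IsLatticePt x → (x ∈ intrinsicInterior ℝ ((r : ℝ) • P) ↔ x = m)) ∧
  IsReflexiveIn ((fun x => x - m) '' ((r : ℝ) • P))

/-- The Minkowski sum `Δ 0 + ⋯ + Δ (r-1)` of a family of sets. -/
def minkSum {n r : ℕ} (Δ : Fin r → Set (Fin n → ℝ)) : Set (Fin n → ℝ) :=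
  {x | ∃ f : Fin r → (Fin n → ℝ), (∀ i, f i ∈ Δ i) ∧ x = ∑ i, f i}

/-- The Minkowski sum `Σ_{i ∈ I} Δ i`. -/
def minkSumOver {n r : ℕ} (I : Finset (Fin r)) (Δ : Fin r → Set (Fin n → ℝ)) :
    Set (Fin n → ℝ) :=
  {x | ∃ f : Fin r → (Fin n → ℝ), (∀ i ∈ I, f i ∈ Δ i) ∧ x = ∑ i ∈ I, f i}

/-- The point `x × e_i ∈ ℝ^d × ℝ^r`. -/
def cayleyPt {d r : ℕ} (x : Fin d → ℝ) (i : Fin r) : Fin (d + r) → ℝ :=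
  Fin.append x (fun j => if j = i then 1 else 0)

/-- The Cayley polytope `Δ 0 * ⋯ * Δ (r-1) ⊂ ℝ^d × ℝ^r`. -/
def cayley {d r : ℕ} (Δ : Fin r → Set (Fin d → ℝ)) : Set (Fin (d + r) → ℝ) :=
  convexHull ℝ (⋃ i, (fun x => cayleyPt x i) '' Δ i)

/-- `F` is a facet of `P`: a nonempty exposed face of dimension one less. -/
def IsFacetOf {n : ℕ} (F P : Set (Fin n → ℝ)) : Prop :=
  IsExposed ℝ P F ∧ F.Nonempty ∧ polyDim F + 1 = polyDim P

/-- A special `(r-1)`-simplex of `P`: `r` affinely independent lattice points of `P`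
such that every facet of `P` contains exactly `r - 1` of them. -/
def IsSpecialSimplex {n : ℕ} (P : Set (Fin n → ℝ)) (r : ℕ) (v : Fin r → Fin n → ℝ) : Prop :=
  (∀ i, IsLatticePt (v i) ∧ v i ∈ P) ∧ AffineIndependent ℝ v ∧
  ∀ F, IsFacetOf F P → ∃! i, v i ∉ F

/-- `∇_i = {y : ⟨x,y⟩ ≥ -δ_{ij} ∀ x ∈ Δ_j ∀ j}`, the polytopes of the dual nef-partition. -/
def nefDual {d r : ℕ} (Δ : Fin r → Set (Fin d → ℝ)) (i : Fin r) : Set (Fin d → ℝ) :=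
  {y | ∀ j, ∀ x ∈ Δ j, -(if i = j then (1 : ℝ) else 0) ≤ pairR x y}

/-- A centered nef-partition: lattice polytopes containing `0` whose Minkowski sum is a
reflexive polytope with `0` as its unique interior lattice point. -/
def IsCenteredNefPartition {d r : ℕ} (Δ : Fin r → Set (Fin d → ℝ)) : Prop :=
  (∀ i, IsLatticePoly (Δ i) ∧ (0 : Fin d → ℝ) ∈ Δ i) ∧
  IsReflexivePoly (minkSum Δ) ∧
  ∀ x, IsLatticePt x → x ∈ interior (minkSum Δ) → x = 0

/-- Two centered nef-partitions dual to each other. -/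
def AreDualNefPartitions {d r : ℕ} (Δ Nb : Fin r → Set (Fin d → ℝ)) : Prop :=
  IsCenteredNefPartition Δ ∧ IsCenteredNefPartition Nb ∧
  (∀ i, Nb i = nefDual Δ i) ∧ (∀ i, Δ i = nefDual Nb i)

/-- A Gorenstein cone with its distinguished lattice point `nσ`: a full-dimensional cone
generated by finitely many lattice points on the hyperplane `⟨·, nσ⟩ = 1`. -/
def IsGorensteinCone {n : ℕ} (σ : Set (Fin n → ℝ)) (nσ : Fin n → ℝ) : Prop :=
  IsLatticePt nσ ∧ Submodule.span ℝ σ = ⊤ ∧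
  ∃ V : Finset (Fin n → ℝ), V.Nonempty ∧
    (∀ v ∈ V, IsLatticePt v ∧ pairR v nσ = 1) ∧
    σ = {x | ∃ c : (Fin n → ℝ) → ℝ, (∀ v, 0 ≤ c v) ∧ x = ∑ v ∈ V, c v • v}

/-- The dual cone. -/
def dualCone {n : ℕ} (σ : Set (Fin n → ℝ)) : Set (Fin n → ℝ) :=
  {y | ∀ x ∈ σ, 0 ≤ pairR x y}

/-- Integrally closed lattice polytope: every lattice point of `k • P` is a sum of `k`
lattice points of `P`. -/
def IntegrallyClosed {n : ℕ} (P : Set (Fin n → ℝ)) : Prop :=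
  ∀ (k : ℕ) (x : Fin n → ℝ), IsLatticePt x → x ∈ (k : ℝ) • P →
    ∃ v : Fin k → (Fin n → ℝ), (∀ j, IsLatticePt (v j) ∧ v j ∈ P) ∧ x = ∑ j, v j


section Aux

/-! ### Auxiliary lemmas -/

lemma pairR_add_left {n : ℕ} (x y u : Fin n → ℝ) :
    pairR (x + y) u = pairR x u + pairR y u := by
  simp [pairR, add_mul, Finset.sum_add_distrib]

lemma pairR_sum_left {n : ℕ} {ι : Type*} (s : Finset ι) (f : ι → Fin n → ℝ) (u : Fin n → ℝ) :
    pairR (∑ i ∈ s, f i) u = ∑ i ∈ s, pairR (f i) u := by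
  simp only [pairR, Finset.sum_apply, Finset.sum_mul]
  rw [Finset.sum_comm]

lemma pairR_smul_left {n : ℕ} (c : ℝ) (x u : Fin n → ℝ) :
    pairR (c • x) u = c * pairR x u := by
  simp [pairR, Finset.mul_sum, mul_assoc]

lemma pairR_int {n : ℕ} (x y : Fin n → ℝ) (hx : IsLatticePt x) (hy : IsLatticePt y) :
    ∃ m : ℤ, pairR x y = (m : ℝ) := by
  choose mx hmx using hx
  choose my hmy using hy
  refine ⟨∑ k, mx k * my k, ?_⟩
  rw [pairR]
  push_cast
  exact Finset.sum_congr rfl fun k _ => by rw [hmx k, hmy k]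

lemma latticePt_int_comb {d r : ℕ} (v : Fin r → Fin d → ℝ) (hv : ∀ i, IsLatticePt (v i))
    (c : Fin r → ℤ) : IsLatticePt (∑ i, (c i : ℝ) • v i) := by
  intro k
  choose m hm using fun i => hv i k
  refine ⟨∑ i, c i * m i, ?_⟩
  simp only [Finset.sum_apply, Pi.smul_apply, smul_eq_mul]
  push_cast
  exact Finset.sum_congr rfl fun i _ => by rw [hm i]

lemma exists_nonzero_latticePt {n : ℕ} (P : Set (Fin n → ℝ)) (hP : IsLatticePoly P)
    (hdim : 0 < polyDim P) : ∃ v, IsLatticePt v ∧ v ∈ P ∧ v ≠ 0 := by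
  obtain ⟨V, hVne, hVlat, hVeq⟩ := hP
  by_contra hno
  push_neg at hno
  have hsub : (V : Set (Fin n → ℝ)) ⊆ {0} := by
    intro v hv
    exact hno v (hVlat v hv) (hVeq ▸ subset_convexHull ℝ _ hv)
  have hP0 : P ⊆ {(0 : Fin n → ℝ)} := by
    rw [hVeq]
    exact convexHull_min hsub (convex_singleton 0)
  have hd0 : polyDim P = 0 := by
    unfold polyDim
    have h1 : (affineSpan ℝ P).direction ≤ (affineSpan ℝ ({0} : Set (Fin n → ℝ))).direction :=
      AffineSubspace.direction_le (affineSpan_mono ℝ hP0)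
    have h2 : (affineSpan ℝ ({0} : Set (Fin n → ℝ))).direction = ⊥ := by
      rw [direction_affineSpan, vectorSpan_singleton]
    rw [h2, le_bot_iff] at h1
    rw [h1, finrank_bot]
  omega

lemma exists_int_clear {r : ℕ} (a : Fin r → ℚ) :
    ∃ (N : ℕ) (az : Fin r → ℤ), 0 < N ∧ ∀ i, (az i : ℚ) = (N : ℚ) * a i := by
  have hdvd : ∀ i, ∃ c : ℕ, ∏ j, (a j).den = (a i).den * c := fun i =>
    Finset.dvd_prod_of_mem (fun j => (a j).den) (Finset.mem_univ i)
  choose c hc using hdvd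
  refine ⟨∏ j, (a j).den, fun i => (a i).num * (c i : ℤ),
    Finset.prod_pos fun i _ => (a i).pos, fun i => ?_⟩
  have key : ((a i).den : ℚ) * a i = (a i).num := by exact_mod_cast Rat.den_mul_eq_num (a i)
  have hcast : ((∏ j, (a j).den : ℕ) : ℚ) = ((a i).den : ℚ) * (c i : ℚ) := by
    exact_mod_cast congrArg (Nat.cast : ℕ → ℚ) (hc i)
  push_cast
  rw [← Nat.cast_prod, hcast, show ((a i).den : ℚ) * (c i : ℚ) * a i = (c i : ℚ) * (((a i).den : ℚ) * a i)
    from by ring, key]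
  ring

/-- Main separation lemma: a point pairing nonnegatively with all the lattice points
generating the dual polytope lies in the interior. -/
lemma mem_interior_of_dual_bound {d : ℕ} (P : Set (Fin d → ℝ)) (T : Finset (Fin d → ℝ))
    (hT : P = convexHull ℝ (T : Set (Fin d → ℝ))) (h0 : (0 : Fin d → ℝ) ∈ P)
    (W : Finset (Fin d → ℝ)) (hW : dualPoly P = convexHull ℝ (W : Set (Fin d → ℝ)))
    (w : Fin d → ℝ) (hw : ∀ u ∈ W, 0 ≤ pairR w u) : w ∈ interior P := by
  classical
  set U : Set (Fin d → ℝ) := ⋂ u ∈ W, {x | -1 < pairR x u} with hUdef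
  have hcont : ∀ u : Fin d → ℝ, Continuous fun x : Fin d → ℝ => pairR x u := by
    intro u
    exact continuous_finset_sum _ fun k _ => (continuous_apply k).mul continuous_const
  have hUopen : IsOpen U :=
    isOpen_biInter_finset fun u _ => isOpen_lt continuous_const (hcont u)
  have hUP : U ⊆ P := by
    intro x hx
    by_contra hxP
    have hconv : Convex ℝ P := hT ▸ convex_convexHull ℝ _
    have hclosed : IsClosed P := hT ▸ (T.finite_toSet.isCompact_convexHull ℝ).isClosed
    obtain ⟨f, u, hfu, hux⟩ := geometric_hahn_banach_closed_point hconv hclosed hxP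
    have hu0 : 0 < u := by simpa using hfu 0 h0
    set y : Fin d → ℝ := fun k => -(u⁻¹) * f (fun j => if k = j then 1 else 0) with hydef
    have hpy : ∀ z : Fin d → ℝ, pairR z y = -(u⁻¹) * f z := by
      intro z
      have hz : f z = ∑ k, z k * f (fun j => if k = j then 1 else 0) := by
        conv_lhs => rw [pi_eq_sum_univ z]
        rw [map_sum]
        exact Finset.sum_congr rfl fun k _ => by rw [map_smul]; simp [smul_eq_mul]
      rw [pairR, hz, Finset.mul_sum]
      exact Finset.sum_congr rfl fun k _ => by rw [hydef]; ring
    have hyP : y ∈ dualPoly P := by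
      intro ax hax
      rw [hpy]
      have h1 : u⁻¹ * f ax ≤ u⁻¹ * u :=
        mul_le_mul_of_nonneg_left (hfu ax hax).le (inv_nonneg.2 hu0.le)
      rw [inv_mul_cancel₀ hu0.ne'] at h1
      linarith
    rw [hW] at hyP
    have hlin : IsLinearMap ℝ fun y' : Fin d → ℝ => pairR x y' := by
      constructor
      · intro y1 y2
        simp [pairR, mul_add, Finset.sum_add_distrib]
      · intro c y1
        simp [pairR, Finset.mul_sum, smul_eq_mul]
        exact Finset.sum_congr rfl fun k _ => by ring
    have hhull : convexHull ℝ (W : Set (Fin d → ℝ)) ⊆ {y' | -1 < pairR x y'} := by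
      apply convexHull_min
      · intro u' hu'
        exact Set.mem_iInter₂.1 hx u' hu'
      · exact convex_halfSpace_gt hlin (-1)
    have hcontra : -1 < pairR x y := hhull hyP
    rw [hpy] at hcontra
    have h2 : u⁻¹ * u < u⁻¹ * f x := mul_lt_mul_of_pos_left hux (inv_pos.2 hu0)
    rw [inv_mul_cancel₀ hu0.ne'] at h2
    linarith
  have hwU : w ∈ U := by
    refine Set.mem_iInter₂.2 fun u hu => ?_
    have := hw u hu
    simp only [Set.mem_setOf_eq]
    linarith
  exact mem_interior.2 ⟨U, hUP, hUopen, hwU⟩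

/-- Positive parts of integer relations among nonzero lattice points of the parts of a
centered nef-partition are again relations. -/
lemma keyZ {d r : ℕ} (Δ : Fin r → Set (Fin d → ℝ)) (h : IsCenteredNefPartition Δ)
    (v : Fin r → Fin d → ℝ) (hvL : ∀ i, IsLatticePt (v i)) (hvΔ : ∀ i, v i ∈ Δ i)
    (a : Fin r → ℤ) (ha : ∑ i, (a i : ℝ) • v i = 0) :
    ∑ i, ((max (a i) 0 : ℤ) : ℝ) • v i = 0 := by
  classical
  obtain ⟨hΔi, hrefl, huniq⟩ := h
  obtain ⟨hlat, h0int, hdual⟩ := hrefl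
  obtain ⟨T, hTne, hTlat, hTeq⟩ := hlat
  obtain ⟨W, hWne, hWlat, hWeq⟩ := hdual
  set w : Fin d → ℝ := ∑ i, ((max (a i) 0 : ℤ) : ℝ) • v i with hwdef
  -- second representation of w using negative parts
  have hw2 : w = ∑ i, ((max (-(a i)) 0 : ℤ) : ℝ) • v i := by
    have hdiff : w - ∑ i, ((max (-(a i)) 0 : ℤ) : ℝ) • v i = ∑ i, (a i : ℝ) • v i := by
      rw [hwdef, ← Finset.sum_sub_distrib]
      refine Finset.sum_congr rfl fun i _ => ?_
      rw [← sub_smul]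
      congr 1
      have : max (a i) 0 - max (-(a i)) 0 = a i := by
        rcases le_total (a i) 0 with hle | hle
        · rw [max_eq_right hle, max_eq_left (by omega)]; omega
        · rw [max_eq_left hle, max_eq_right (by omega)]; omega
      rw [← Int.cast_sub, this]
    rw [ha] at hdiff
    exact sub_eq_zero.1 hdiff
  -- membership of sums in the Minkowski sum
  have hmem2 : ∀ i j : Fin r, i ≠ j → v i + v j ∈ minkSum Δ := by
    intro i j hij
    refine ⟨fun l => if l = i then v i else if l = j then v j else 0, fun l => ?_, ?_⟩
    · rcases eq_or_ne l i with rfl | h1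
      · simpa using hvΔ l
      rcases eq_or_ne l j with rfl | h2
      · simp only [if_neg h1, if_pos rfl]; exact hvΔ l
      · simp only [if_neg h1, if_neg h2]; exact (hΔi l).2
    · rw [← Finset.sum_subset (Finset.subset_univ ({i, j} : Finset (Fin r)))]
      · rw [Finset.sum_pair hij]
        simp [hij, Ne.symm hij]
      · intro x _ hx
        simp only [Finset.mem_insert, Finset.mem_singleton] at hx
        push_neg at hx
        simp [hx.1, hx.2]
  -- at most one part pairs negatively with a dual lattice point
  have hD : ∀ u ∈ W, ∀ i j : Fin r, i ≠ j → pairR (v i) u < 0 → 0 ≤ pairR (v j) u := by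
    intro u hu i j hij hi
    by_contra hj
    push_neg at hj
    obtain ⟨mi, hmi⟩ := pairR_int (v i) u (hvL i) (hWlat u hu)
    obtain ⟨mj, hmj⟩ := pairR_int (v j) u (hvL j) (hWlat u hu)
    have hmi1 : mi ≤ -1 := by
      have : (mi : ℝ) < 0 := hmi ▸ hi
      exact_mod_cast Int.lt_add_one_iff.1 (by exact_mod_cast this)
    have hmj1 : mj ≤ -1 := by
      have : (mj : ℝ) < 0 := hmj ▸ hj
      exact_mod_cast Int.lt_add_one_iff.1 (by exact_mod_cast this)
    have hudual : u ∈ dualPoly (minkSum Δ) := by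
      rw [hWeq]
      exact subset_convexHull ℝ _ hu
    have hbound := hudual (v i + v j) (hmem2 i j hij)
    rw [pairR_add_left, hmi, hmj] at hbound
    have : (-1 : ℝ) ≤ (mi : ℝ) + (mj : ℝ) := hbound
    have : (-1 : ℤ) ≤ mi + mj := by exact_mod_cast this
    omega
  -- w pairs nonnegatively with every dual lattice generator
  have hwge : ∀ u ∈ W, 0 ≤ pairR w u := by
    intro u hu
    by_cases hcase : ∃ i, pairR (v i) u < 0 ∧ 0 < a i
    · obtain ⟨i0, hi0neg, hi0a⟩ := hcase
      rw [hw2, pairR_sum_left]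
      refine Finset.sum_nonneg fun i _ => ?_
      rw [pairR_smul_left]
      rcases eq_or_ne i i0 with rfl | hne
      · have : max (-(a i)) 0 = 0 := max_eq_right (by omega)
        rw [this]
        simp
      · have h1 : 0 ≤ pairR (v i) u := hD u hu i0 i (Ne.symm hne) hi0neg
        have h2 : (0 : ℝ) ≤ ((max (-(a i)) 0 : ℤ) : ℝ) := by
          exact_mod_cast le_max_right (-(a i)) 0
        positivity
    · push_neg at hcase
      rw [hwdef, pairR_sum_left]
      refine Finset.sum_nonneg fun i _ => ?_
      rw [pairR_smul_left]
      rcases lt_or_ge (pairR (v i) u) 0 with hneg | hpos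
      · have : a i ≤ 0 := hcase i hneg
        have : max (a i) 0 = 0 := max_eq_right this
        rw [this]
        simp
      · have h2 : (0 : ℝ) ≤ ((max (a i) 0 : ℤ) : ℝ) := by
          exact_mod_cast le_max_right (a i) 0
        positivity
  -- conclude
  have hwlat : IsLatticePt w := latticePt_int_comb v hvL _
  have hwint : w ∈ interior (minkSum Δ) :=
    mem_interior_of_dual_bound (minkSum Δ) T hTeq (interior_subset h0int) W hWeq w hwge
  exact huniq w hwlat hwint


open Classical in
lemma keyLA {r d : ℕ} (φ : (Fin r → ℚ) →ₗ[ℚ] (Fin d → ℚ))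
    (hpos : ∀ a, φ a = 0 → φ (fun i => max (a i) 0) = 0)
    (hnz : ∀ i, φ (Pi.single i 1) ≠ 0) : r ≤ 2 * d := by
  classical
  set SP : Finset (Fin r) → Prop :=
    fun P => ∀ a, φ a = 0 → (∀ i ∈ P, a i = 0) → a = 0 with hSP
  have hSPuniv : SP Finset.univ := by
    intro a ha h0
    funext i; exact h0 i (Finset.mem_univ i)
  -- minimal cardinality P with SP P
  have hne : {n | ∃ P : Finset (Fin r), P.card = n ∧ SP P}.Nonempty :=
    ⟨Finset.univ.card, Finset.univ, rfl, hSPuniv⟩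
  obtain ⟨P, hPcard, hP⟩ := Nat.sInf_mem hne
  have hmin : ∀ Q : Finset (Fin r), SP Q → P.card ≤ Q.card := by
    intro Q hQ
    rw [hPcard]
    exact Nat.sInf_le ⟨Q, rfl, hQ⟩
  -- for each p ∈ P, a normalized relation vector b p
  have hb : ∀ p : Fin r, ∃ b : Fin r → ℚ, p ∈ P →
      (φ b = 0 ∧ b p = 1 ∧ (∀ q ∈ P, q ≠ p → b q = 0) ∧ (∀ i, 0 ≤ b i)
        ∧ ∃ i, i ≠ p ∧ b i ≠ 0) := by
    intro p
    by_cases hp : p ∈ P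
    · have hfail : ∃ a, φ a = 0 ∧ (∀ i ∈ P.erase p, a i = 0) ∧ a ≠ 0 := by
        by_contra hno
        push_neg at hno
        have hsp : SP (P.erase p) := by
          intro a ha hz
          by_contra hane
          exact hane (hno a ha hz)
        have := hmin _ hsp
        have hcard := Finset.card_erase_of_mem hp
        have hpos' : 0 < P.card := Finset.card_pos.2 ⟨p, hp⟩
        omega
      obtain ⟨a, ha0, haz, hane⟩ := hfail
      have hap : a p ≠ 0 := by
        intro h
        apply hane
        apply hP a ha0
        intro i hi
        rcases eq_or_ne i p with rfl | h'
        · exact h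
        · exact haz i (Finset.mem_erase.2 ⟨h', hi⟩)
      set b : Fin r → ℚ := (a p)⁻¹ • a with hbdef
      have hφb : φ b = 0 := by rw [hbdef, map_smul, ha0, smul_zero]
      have hbp : b p = 1 := by
        simp [hbdef, inv_mul_cancel₀ hap]
      have hbq : ∀ q ∈ P, q ≠ p → b q = 0 := by
        intro q hq hqp
        simp [hbdef, haz q (Finset.mem_erase.2 ⟨hqp, hq⟩)]
      -- nonnegativity
      have hbnn : ∀ i, 0 ≤ b i := by
        have hc : φ (fun i => max (-(b i)) 0) = 0 := by
          have : φ (-b) = 0 := by rw [map_neg, hφb, neg_zero]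
          simpa using hpos (-b) this
        have hz : (fun i => max (-(b i)) 0) = 0 := by
          apply hP _ hc
          intro i hi
          rcases eq_or_ne i p with rfl | h'
          · simp [hbp]
          · simp [hbq i hi h']
        intro i
        have := congrFun hz i
        simp only [Pi.zero_apply] at this
        have : -(b i) ≤ 0 := le_of_max_le_left this.le
        linarith
      refine ⟨b, fun _ => ⟨hφb, hbp, hbq, hbnn, ?_⟩⟩
      -- support has another element
      by_contra hno
      push_neg at hno
      have : b = Pi.single p 1 := by
        funext i
        rcases eq_or_ne i p with rfl | h'
        · simp [hbp]
        · simp [hno i h', Pi.single_eq_of_ne h']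
      exact hnz p (this ▸ hφb)
    · exact ⟨0, fun h => absurd h hp⟩
  choose b hbprop using hb
  -- disjoint supports
  have hdisj : ∀ p ∈ P, ∀ p' ∈ P, p ≠ p' → ∀ i, b p i = 0 ∨ b p' i = 0 := by
    intro p hp p' hp' hne i
    obtain ⟨hφp, hbp1, hbpq, hbpn, -⟩ := hbprop p hp
    obtain ⟨hφp', hbp'1, hbp'q, hbp'n, -⟩ := hbprop p' hp'
    set m : Fin r → ℚ := fun i => min (b p i) (b p' i) with hmdef
    have hmeq : m = b p - fun i => max (b p i - b p' i) 0 := by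
      funext i
      simp only [hmdef, Pi.sub_apply]
      rcases le_total (b p i) (b p' i) with h | h
      · rw [min_eq_left h, max_eq_right (by linarith)]; ring
      · rw [min_eq_right h, max_eq_left (by linarith)]; ring
    have hφm : φ m = 0 := by
      rw [hmeq, map_sub, hφp]
      have : φ (b p - b p') = 0 := by rw [map_sub, hφp, hφp', sub_zero]
      have := hpos _ this
      simp only [Pi.sub_apply] at this
      rw [this]; simp
    have hmz : m = 0 := by
      apply hP _ hφm
      intro q hq
      simp only [hmdef]
      rcases eq_or_ne q p with rfl | h1
      · rw [hbp'q q hq hne]; simp [min_eq_right, hbpn q]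
      rcases eq_or_ne q p' with rfl | h2
      · rw [hbpq q hq h1]; simp [min_eq_left, hbp'n q]
      · rw [hbpq q hq h1, hbp'q q hq h2]; simp
    have := congrFun hmz i
    simp only [hmdef, Pi.zero_apply] at this
    rcases le_total (b p i) (b p' i) with h | h
    · left; exact le_antisymm (by rw [min_eq_left h] at this; exact this.le) (hbpn i)
    · right; exact le_antisymm (by rw [min_eq_right h] at this; exact this.le) (hbp'n i)
  -- supports
  set S : Fin r → Finset (Fin r) := fun p => Finset.univ.filter (fun i => b p i ≠ 0) with hSdef
  have hcard2 : ∀ p ∈ P, 2 ≤ (S p).card := by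
    intro p hp
    obtain ⟨-, hbp1, -, -, i, hip, hib⟩ := hbprop p hp
    exact Finset.one_lt_card.2 ⟨p, by simp [hSdef, hbp1], i, by simp [hSdef, hib], Ne.symm hip⟩
  -- counting: 2 * P.card ≤ r
  have hcount : 2 * P.card ≤ r := by
    have hdisjS : ∀ x ∈ P, ∀ y ∈ P, x ≠ y → Disjoint (S x) (S y) := by
      intro x hx y hy hxy
      rw [Finset.disjoint_left]
      intro i hix hiy
      simp only [hSdef, Finset.mem_filter] at hix hiy
      rcases hdisj x hx y hy hxy i with h | h
      · exact hix.2 h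
      · exact hiy.2 h
    calc 2 * P.card = ∑ _p ∈ P, 2 := by rw [Finset.sum_const, smul_eq_mul, mul_comm]
    _ ≤ ∑ p ∈ P, (S p).card := Finset.sum_le_sum hcard2
    _ = (P.biUnion S).card := (Finset.card_biUnion hdisjS).symm
    _ ≤ (Finset.univ : Finset (Fin r)).card := Finset.card_le_card (Finset.subset_univ _)
    _ = r := by simp
  -- injectivity bound: r ≤ P.card + d
  have hrank : r ≤ P.card + d := by
    set ψ : (Fin r → ℚ) →ₗ[ℚ] ({x // x ∈ P} → ℚ) × (Fin d → ℚ) :=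
      (LinearMap.funLeft ℚ ℚ (Subtype.val : {x // x ∈ P} → Fin r)).prod φ with hψdef
    have hinj : Function.Injective ψ := by
      rw [← LinearMap.ker_eq_bot, LinearMap.ker_eq_bot']
      intro a ha
      rw [hψdef, LinearMap.prod_apply] at ha
      have h1 := congrArg Prod.fst ha
      have h2 := congrArg Prod.snd ha
      simp only [Prod.fst_zero, Prod.snd_zero] at h1 h2
      apply hP a h2
      intro i hi
      exact congrFun h1 ⟨i, hi⟩
    have := LinearMap.finrank_le_finrank_of_injective hinj
    rwa [Module.finrank_pi, Module.finrank_prod, Module.finrank_pi, Module.finrank_pi,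
      Fintype.card_fin, Fintype.card_coe, Fintype.card_fin] at this
  omega

end Aux

/-- A centered proper nef-partition in `ℝ^d` has length `r ≤ 2d`. -/
theorem proper_nef_partition_length_le {d r : ℕ}
    (Δ : Fin r → Set (Fin d → ℝ))
    (h : IsCenteredNefPartition Δ)
    (hproper : ∀ i, 0 < polyDim (Δ i)) :
    r ≤ 2 * d := by
  classical
  have hv : ∀ i, ∃ v, IsLatticePt v ∧ v ∈ Δ i ∧ v ≠ 0 := fun i =>
    exists_nonzero_latticePt _ (h.1 i).1 (hproper i)
  choose v hvL hvΔ hvne using hv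
  choose vz hvz using fun i => hvL i
  set φ : (Fin r → ℚ) →ₗ[ℚ] (Fin d → ℚ) :=
    { toFun := fun a => ∑ i, a i • (fun k => (vz i k : ℚ))
      map_add' := by
        intro a b
        simp only [Pi.add_apply, add_smul]
        rw [Finset.sum_add_distrib]
      map_smul' := by
        intro c a
        simp only [Pi.smul_apply, smul_eq_mul, RingHom.id_apply, mul_smul]
        rw [Finset.smul_sum] } with hφdef
  have hφapp : ∀ (a : Fin r → ℚ) (k : Fin d), φ a k = ∑ i, a i * (vz i k : ℚ) := by
    intro a k
    rw [hφdef]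
    simp [LinearMap.coe_mk, AddHom.coe_mk, Finset.sum_apply]
  have hbridge : ∀ a : Fin r → ℚ, φ a = 0 ↔ ∑ i, ((a i : ℝ)) • v i = 0 := by
    intro a
    have hcoord : ∀ k, ((φ a k : ℚ) : ℝ) = (∑ i, ((a i : ℝ)) • v i) k := by
      intro k
      rw [hφapp]
      push_cast
      simp only [Finset.sum_apply, Pi.smul_apply, smul_eq_mul]
      exact Finset.sum_congr rfl fun i _ => by rw [hvz i k]
    constructor
    · intro h0
      funext k
      have := hcoord k
      rw [h0] at this
      simpa using this.symm
    · intro h0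
      funext k
      have := hcoord k
      rw [h0] at this
      simp only [Pi.zero_apply] at this ⊢
      exact_mod_cast this
  apply keyLA φ
  · intro a ha
    obtain ⟨N, az, hN, haz⟩ := exists_int_clear a
    have hNR : ((N : ℚ) : ℝ) = (N : ℝ) := by push_cast; ring
    have haR : ∑ i, ((az i : ℝ)) • v i = 0 := by
      have h1 := (hbridge a).1 ha
      have h2 : ∑ i, ((az i : ℝ)) • v i = (N : ℝ) • ∑ i, ((a i : ℝ)) • v i := by
        rw [Finset.smul_sum]
        refine Finset.sum_congr rfl fun i _ => ?_
        rw [smul_smul]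
        congr 1
        have := haz i
        have : ((az i : ℚ) : ℝ) = (((N : ℚ) * a i : ℚ) : ℝ) := by rw [this]
        push_cast at this
        exact_mod_cast this
      rw [h2, h1, smul_zero]
    have hkz := keyZ Δ h v hvL hvΔ az haR
    apply (hbridge _).2
    have hNne : (N : ℝ) ≠ 0 := by positivity
    have hmax : ∀ i, ((max (az i) 0 : ℤ) : ℚ) = (N : ℚ) * max (a i) 0 := by
      intro i
      have hN0 : (0 : ℚ) ≤ (N : ℚ) := by positivity
      rcases le_total (a i) 0 with hle | hle
      · have h1 : az i ≤ 0 := by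
          have : (az i : ℚ) ≤ 0 := by
            rw [haz i]
            exact mul_nonpos_of_nonneg_of_nonpos hN0 hle
          exact_mod_cast this
        rw [max_eq_right h1, max_eq_right hle]
        simp
      · have h1 : 0 ≤ az i := by
          have : (0 : ℚ) ≤ (az i : ℚ) := by
            rw [haz i]
            exact mul_nonneg hN0 hle
          exact_mod_cast this
        rw [max_eq_left h1, max_eq_left hle, haz i]
    have heq : ∑ i, (((fun i => max (a i) 0) i : ℚ) : ℝ) • v i
        = (N : ℝ)⁻¹ • ∑ i, ((max (az i) 0 : ℤ) : ℝ) • v i := by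
      rw [Finset.smul_sum]
      refine Finset.sum_congr rfl fun i _ => ?_
      rw [smul_smul]
      congr 1
      have h3 : ((max (az i) 0 : ℤ) : ℝ) = (N : ℝ) * ((max (a i) 0 : ℚ) : ℝ) := by
        have := hmax i
        have : ((max (az i) 0 : ℤ) : ℝ) = (((N : ℚ) * max (a i) 0 : ℚ) : ℝ) := by
          exact_mod_cast congrArg (fun q : ℚ => (q : ℝ)) this
        rw [this]
        push_cast
        ring
      rw [h3]
      field_simp
    rw [heq, hkz, smul_zero]
  · intro i hzero
    have h0 := (hbridge (Pi.single i 1)).1 hzero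
    rw [Finset.sum_eq_single i] at h0
    · apply hvne i
      simpa using h0
    · intro j _ hji
      simp [Pi.single_eq_of_ne hji]
    · intro hni
      exact absurd (Finset.mem_univ i) hni
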